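/- Let M be an n × n binary image whose image graph has C connected components. Then the distance from M to connectedness (minimum number of pixel changes to make the image graph connected) is at least (C - 1)/3. -/

import Mathlib

open Finset

/-- Two pixels are adjacent if they are at Manhattan distance 1. -/
def Adj (p q : ℕ × ℕ) : Prop :=
  (p.1 = q.1 ∧ (p.2 + 1 = q.2 ∨ q.2 + 1 = p.2)) ∨
  (p.2 = q.2 ∧ (p.1 + 1 = q.1 ∨ q.1 + 1 = p.1))

/-- A pixel lies inside the `k × k` square (0-indexed coordinates). -/
def InSquare (k : ℕ) (p : ℕ × ℕ) : Prop := p.1 < k ∧ p.2 < k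

/-- A pixel is on the border of the `k × k` square. -/
def OnBorder (k : ℕ) (p : ℕ × ℕ) : Prop :=
  InSquare k p ∧ (p.1 = 0 ∨ p.1 = k - 1 ∨ p.2 = 0 ∨ p.2 = k - 1)

/-- One step of the image graph of the `k × k` image `s`: both pixels are black,
inside the square and adjacent. -/
def BlackAdj (k : ℕ) (s : ℕ × ℕ → Bool) (p q : ℕ × ℕ) : Prop :=
  InSquare k p ∧ InSquare k q ∧ s p = true ∧ s q = true ∧ Adj p q

/-- A `k × k` image is border-connected if every black pixel is connected, through
black pixels, to a black pixel on the border. -/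
def BorderConnected (k : ℕ) (s : ℕ × ℕ → Bool) : Prop :=
  ∀ p, InSquare k p → s p = true →
    ∃ q, OnBorder k q ∧ s q = true ∧ Relation.ReflTransGen (BlackAdj k s) p q

/-- Number of pixels of the `k × k` square on which `s` and `t` differ. -/
def diffCount (k : ℕ) (s t : ℕ × ℕ → Bool) : ℕ :=
  ((Finset.range k ×ˢ Finset.range k).filter (fun p => s p ≠ t p)).card

/-- Distance of a `k × k` image to border-connectedness. -/
noncomputable def distBC (k : ℕ) (s : ℕ × ℕ → Bool) : ℕ :=
  sInf {d | ∃ t, BorderConnected k t ∧ diffCount k s t = d}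

/-- An `n × n` image is connected if its image graph is connected. -/
def ImgConnected (n : ℕ) (M : ℕ × ℕ → Bool) : Prop :=
  ∀ p q, InSquare n p → InSquare n q → M p = true → M q = true →
    Relation.ReflTransGen (BlackAdj n M) p q

/-- Distance of an `n × n` image to connectedness. -/
noncomputable def distConn (n : ℕ) (M : ℕ × ℕ → Bool) : ℕ :=
  sInf {d | ∃ t, ImgConnected n t ∧ diffCount n M t = d}

/-- The subimage of `s` whose origin is at `(u, v)`. -/
def shiftIm (s : ℕ × ℕ → Bool) (u v : ℕ) : ℕ × ℕ → Bool :=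
  fun p => s (p.1 + u, p.2 + v)

/-- The image graph of an `n × n` image: vertices are black pixels inside the square,
edges connect pixels at Manhattan distance 1. -/
def imageGraph (n : ℕ) (M : ℕ × ℕ → Bool) :
    SimpleGraph {p : ℕ × ℕ // InSquare n p ∧ M p = true} where
  Adj := fun p q => Adj p.1 q.1
  symm := by constructor; intro p q h; unfold Adj at *; omega
  loopless := by constructor; intro p h; unfold Adj at h; omega

/-- The number of connected components of the image graph of an `n × n` image. -/
noncomputable def numComponents (n : ℕ) (M : ℕ × ℕ → Bool) : ℕ :=
  Nat.card (imageGraph n M).ConnectedComponent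

instance vtxFinite (k : ℕ) (s : ℕ × ℕ → Bool) :
    Finite {p : ℕ × ℕ // InSquare k p ∧ s p = true} := by
  apply Finite.of_injective (fun v => ((⟨v.1.1, v.2.1.1⟩ : Fin k), (⟨v.1.2, v.2.1.2⟩ : Fin k)))
  intro a b hab
  simp only [Prod.ext_iff, Fin.mk.injEq] at hab
  exact Subtype.ext (Prod.ext hab.1 hab.2)

/-- images agreeing on the square have the same number of components -/
lemma numComponents_congr (k : ℕ) (s t : ℕ × ℕ → Bool)
    (hst : ∀ q, InSquare k q → s q = t q) :
    numComponents k s = numComponents k t := by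
  let f : imageGraph k s →g imageGraph k t :=
    ⟨fun v => ⟨v.1, v.2.1, (hst v.1 v.2.1) ▸ v.2.2⟩, fun h => h⟩
  let g : imageGraph k t →g imageGraph k s :=
    ⟨fun v => ⟨v.1, v.2.1, (hst v.1 v.2.1).symm ▸ v.2.2⟩, fun h => h⟩
  refine Nat.card_congr ⟨SimpleGraph.ConnectedComponent.map f,
    SimpleGraph.ConnectedComponent.map g, ?_, ?_⟩
  · intro K
    refine SimpleGraph.ConnectedComponent.ind (fun v => ?_) K
    simp only [SimpleGraph.ConnectedComponent.map_mk]
    congr 1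
  · intro K
    refine SimpleGraph.ConnectedComponent.ind (fun v => ?_) K
    simp only [SimpleGraph.ConnectedComponent.map_mk]
    congr 1

section Removal

variable {k : ℕ} {s t : ℕ × ℕ → Bool} {p : ℕ × ℕ}
  (hst : ∀ q, q ≠ p → s q = t q) (hp : InSquare k p)
  (hsp : s p = false) (htp : t p = true)

/-- vertex of t with value ≠ p, as a vertex of s -/
def toVs (x : {q : ℕ × ℕ // InSquare k q ∧ t q = true}) (hx : x.1 ≠ p)
    (hst : ∀ q, q ≠ p → s q = t q) : {q : ℕ × ℕ // InSquare k q ∧ s q = true} :=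
  ⟨x.1, x.2.1, by rw [hst x.1 hx]; exact x.2.2⟩

/-- first-hit lemma: a t-path to p yields an s-path to a neighbour of p. -/
lemma firstHit (x : {q : ℕ × ℕ // InSquare k q ∧ t q = true})
    (hreach : Relation.ReflTransGen (imageGraph k t).Adj x ⟨p, hp, htp⟩)
    (hx : x.1 ≠ p) :
    ∃ q : {q : ℕ × ℕ // InSquare k q ∧ s q = true}, Adj q.1 p ∧
      Relation.ReflTransGen (imageGraph k s).Adj (toVs x hx hst) q := by
  induction hreach using Relation.ReflTransGen.head_induction_on with
  | refl => exact absurd rfl hx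
  | head h' hrest ih =>
    rename_i a c
    by_cases hc : c.1 = p
    · refine ⟨toVs a hx hst, ?_, Relation.ReflTransGen.refl⟩
      show Adj a.1 p
      rw [← hc]; exact h'
    · obtain ⟨q, hq, hpath⟩ := ih hc
      exact ⟨q, hq, Relation.ReflTransGen.head
        (show (imageGraph k s).Adj (toVs a hx hst) (toVs c hc hst) from h') hpath⟩

/-- avoidance lemma -/
lemma avoidP (x y : {q : ℕ × ℕ // InSquare k q ∧ t q = true})
    (hreach : Relation.ReflTransGen (imageGraph k t).Adj x y)
    (hy : y.1 ≠ p) (hx : x.1 ≠ p) :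
    Relation.ReflTransGen (imageGraph k t).Adj x ⟨p, hp, htp⟩ ∨
      Relation.ReflTransGen (imageGraph k s).Adj (toVs x hx hst) (toVs y hy hst) := by
  induction hreach using Relation.ReflTransGen.head_induction_on with
  | refl => exact Or.inr Relation.ReflTransGen.refl
  | head h' hrest ih =>
    rename_i a c
    by_cases hc : c.1 = p
    · left
      have : c = ⟨p, hp, htp⟩ := Subtype.ext hc
      exact Relation.ReflTransGen.single (this ▸ h')
    · rcases ih hc with hl | hr
      · exact Or.inl (Relation.ReflTransGen.head h' hl)
      · exact Or.inr (Relation.ReflTransGen.head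
          (show (imageGraph k s).Adj (toVs a hx hst) (toVs c hc hst) from h') hr)

include hst hp hsp htp in
/-- Removing a black pixel increases the number of components by at most 3. -/
lemma removal_card :
    numComponents k s ≤ numComponents k t + 3 := by
  classical
  set Vs := {q : ℕ × ℕ // InSquare k q ∧ s q = true}
  set Vt := {q : ℕ × ℕ // InSquare k q ∧ t q = true}
  haveI : Fintype Vs := Fintype.ofFinite _
  haveI : Fintype Vt := Fintype.ofFinite _
  haveI : Fintype (imageGraph k s).ConnectedComponent := Fintype.ofFinite _
  haveI : Fintype (imageGraph k t).ConnectedComponent := Fintype.ofFinite _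
  have hvne0 : ∀ v : Vs, v.1 ≠ p := by
    intro v hv
    have h2 := v.2.2
    rw [hv, hsp] at h2
    exact Bool.noConfusion h2
  let f : imageGraph k s →g imageGraph k t :=
    ⟨fun v => ⟨v.1, v.2.1, by rw [← hst v.1 (hvne0 v)]; exact v.2.2⟩, fun h => h⟩
  let φ : (imageGraph k s).ConnectedComponent → (imageGraph k t).ConnectedComponent :=
    SimpleGraph.ConnectedComponent.map f
  let c₀ : (imageGraph k t).ConnectedComponent :=
    (imageGraph k t).connectedComponentMk ⟨p, hp, htp⟩
  -- vertex values of s are never p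
  have hvne : ∀ v : Vs, v.1 ≠ p := hvne0
  -- every component in the fiber of c₀ contains a neighbour of p
  have hfib : ∀ K, φ K = c₀ → ∃ q : Vs, Adj q.1 p ∧
      (imageGraph k s).connectedComponentMk q = K := by
    intro K
    refine SimpleGraph.ConnectedComponent.ind (fun u hu => ?_) K
    have hreach : (imageGraph k t).Reachable (f u) ⟨p, hp, htp⟩ :=
      (SimpleGraph.ConnectedComponent.eq).mp hu
    rw [SimpleGraph.reachable_iff_reflTransGen] at hreach
    obtain ⟨q, hq, hpath⟩ := firstHit hst hp htp (f u) hreach (hvne u)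
    refine ⟨q, hq, ?_⟩
    have : (imageGraph k s).Reachable u q := by
      rw [SimpleGraph.reachable_iff_reflTransGen]
      have : toVs (s := s) (f u) (hvne u) hst = u := Subtype.ext rfl
      exact this ▸ hpath
    exact ((SimpleGraph.ConnectedComponent.eq).mpr this).symm
  -- fibers away from c₀ are subsingletons
  have hinj : ∀ K K', φ K = φ K' → φ K ≠ c₀ → K = K' := by
    intro K K'
    refine SimpleGraph.ConnectedComponent.ind₂ (fun u u' hu hne => ?_) K K'
    have hreach : (imageGraph k t).Reachable (f u) (f u') :=
      (SimpleGraph.ConnectedComponent.eq).mp hu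
    rw [SimpleGraph.reachable_iff_reflTransGen] at hreach
    rcases avoidP hst hp htp (f u) (f u') hreach (hvne u') (hvne u) with hl | hr
    · exact absurd ((SimpleGraph.ConnectedComponent.eq).mpr
        ((SimpleGraph.reachable_iff_reflTransGen _ _).mpr hl)) hne
    · apply (SimpleGraph.ConnectedComponent.eq).mpr
      rw [SimpleGraph.reachable_iff_reflTransGen]
      have h1 : toVs (s := s) (f u) (hvne u) hst = u := Subtype.ext rfl
      have h2 : toVs (s := s) (f u') (hvne u') hst = u' := Subtype.ext rfl
      exact h1 ▸ h2 ▸ hr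
  -- the neighbour finset
  set N : Finset (ℕ × ℕ) :=
    insert (p.1 + 1, p.2) (insert (p.1, p.2 + 1)
      (insert (p.1 - 1, p.2) {(p.1, p.2 - 1)})) with hN
  have hNcard : N.card ≤ 4 := by
    refine le_trans (Finset.card_insert_le _ _) ?_
    refine Nat.add_le_add_right (le_trans (Finset.card_insert_le _ _) ?_) 1
    refine Nat.add_le_add_right (le_trans (Finset.card_insert_le _ _) ?_) 1
    simp
  have hadjN : ∀ q : ℕ × ℕ, Adj q p → q ∈ N := by
    intro q hq
    simp only [hN, Finset.mem_insert, Finset.mem_singleton, Prod.ext_iff]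
    unfold Adj at hq
    omega
  -- fiber of c₀ has at most 4 elements
  have hfc : ((Finset.univ.filter fun K => φ K = c₀).card ≤ 4) := by
    refine le_trans (Finset.card_le_card_of_injOn
      (fun K => if h : ∃ q : Vs, Adj q.1 p ∧
          (imageGraph k s).connectedComponentMk q = K then h.choose.1 else (0,0))
      ?_ ?_) hNcard
    · intro K hK
      simp only [Finset.coe_filter, Set.mem_setOf_eq] at hK
      have h := hfib K hK.2
      dsimp only
      rw [dif_pos h]
      exact hadjN _ h.choose_spec.1
    · intro K hK K' hK' hFF
      simp only [Finset.coe_filter, Set.mem_setOf_eq] at hK hK'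
      have h := hfib K hK.2
      have h' := hfib K' hK'.2
      dsimp only at hFF
      rw [dif_pos h, dif_pos h'] at hFF
      have : h.choose = h'.choose := Subtype.ext hFF
      rw [← h.choose_spec.2, ← h'.choose_spec.2, this]
  -- counting
  have hcards : Fintype.card (imageGraph k s).ConnectedComponent ≤
      Fintype.card (imageGraph k t).ConnectedComponent + 3 := by
    rw [← Finset.card_univ,
      Finset.card_eq_sum_card_fiberwise (f := φ) (t := Finset.univ) (fun x _ => Finset.mem_univ _)]
    rw [← Finset.add_sum_erase _ _ (Finset.mem_univ c₀)]
    have hrest : ∑ c ∈ Finset.univ.erase c₀,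
        (Finset.univ.filter fun K => φ K = c).card ≤
        (Finset.univ.erase c₀).card := by
      refine Finset.sum_le_card_nsmul _ _ 1 ?_ |>.trans (by simp)
      intro c hc
      rw [Finset.mem_erase] at hc
      refine Finset.card_le_one.mpr (fun K hK K' hK' => ?_)
      rw [Finset.mem_filter] at hK hK'
      exact hinj K K' (hK.2.trans hK'.2.symm) (hK.2.symm ▸ hc.1)
    have hb : 1 ≤ Fintype.card (imageGraph k t).ConnectedComponent :=
      Fintype.card_pos_iff.mpr ⟨c₀⟩
    have := Finset.card_erase_of_mem (Finset.mem_univ c₀)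
    rw [Finset.card_univ] at this
    omega
  rw [numComponents, numComponents, Nat.card_eq_fintype_card, Nat.card_eq_fintype_card]
  exact hcards

end Removal

section Addition

variable {k : ℕ} {s t : ℕ × ℕ → Bool} {p : ℕ × ℕ}
  (hst : ∀ q, q ≠ p → s q = t q) (hp : InSquare k p)
  (hsp : s p = true) (htp : t p = false)

include hst hp hsp htp in
/-- Adding a black pixel increases the number of components by at most 1. -/
lemma addition_card :
    numComponents k s ≤ numComponents k t + 1 := by
  classical
  set Vs := {q : ℕ × ℕ // InSquare k q ∧ s q = true}
  set Vt := {q : ℕ × ℕ // InSquare k q ∧ t q = true}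
  haveI : Fintype Vs := Fintype.ofFinite _
  haveI : Fintype Vt := Fintype.ofFinite _
  haveI : Fintype (imageGraph k s).ConnectedComponent := Fintype.ofFinite _
  haveI : Fintype (imageGraph k t).ConnectedComponent := Fintype.ofFinite _
  have hvne : ∀ v : Vt, v.1 ≠ p := by
    intro v hv
    have h2 := v.2.2
    rw [hv, htp] at h2
    exact Bool.noConfusion h2
  let g : imageGraph k t →g imageGraph k s :=
    ⟨fun v => ⟨v.1, v.2.1, by rw [hst v.1 (hvne v)]; exact v.2.2⟩, fun h => h⟩
  let ψ : (imageGraph k t).ConnectedComponent → (imageGraph k s).ConnectedComponent :=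
    SimpleGraph.ConnectedComponent.map g
  let cp : (imageGraph k s).ConnectedComponent :=
    (imageGraph k s).connectedComponentMk ⟨p, hp, hsp⟩
  have hcover : (Finset.univ : Finset (imageGraph k s).ConnectedComponent) ⊆
      (Finset.univ.image ψ) ∪ {cp} := by
    intro K _
    refine SimpleGraph.ConnectedComponent.ind (fun u => ?_) K
    by_cases hu : u.1 = p
    · have : u = ⟨p, hp, hsp⟩ := Subtype.ext hu
      rw [Finset.mem_union, Finset.mem_singleton]
      exact Or.inr (by rw [this])
    · rw [Finset.mem_union, Finset.mem_image]
      refine Or.inl ⟨(imageGraph k t).connectedComponentMk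
        ⟨u.1, u.2.1, by rw [← hst u.1 hu]; exact u.2.2⟩, Finset.mem_univ _, ?_⟩
      show (imageGraph k s).connectedComponentMk _ = _
      congr 1
  have : Fintype.card (imageGraph k s).ConnectedComponent ≤
      Fintype.card (imageGraph k t).ConnectedComponent + 1 := by
    calc Fintype.card (imageGraph k s).ConnectedComponent
        = (Finset.univ : Finset (imageGraph k s).ConnectedComponent).card :=
          (Finset.card_univ).symm
      _ ≤ ((Finset.univ.image ψ) ∪ {cp}).card := Finset.card_le_card hcover
      _ ≤ (Finset.univ.image ψ).card + 1 := by
          refine le_trans (Finset.card_union_le _ _) ?_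
          simp
      _ ≤ Fintype.card (imageGraph k t).ConnectedComponent + 1 := by
          refine Nat.add_le_add_right ?_ 1
          refine le_trans (Finset.card_image_le) ?_
          simp
  rw [numComponents, numComponents, Nat.card_eq_fintype_card, Nat.card_eq_fintype_card]
  exact this

end Addition

/-- single pixel change lemma -/
lemma step_card (k : ℕ) (s t : ℕ × ℕ → Bool) (p : ℕ × ℕ)
    (hst : ∀ q, q ≠ p → s q = t q) :
    numComponents k s ≤ numComponents k t + 3 := by
  by_cases hp : InSquare k p
  · by_cases hsp : s p = t p
    · have : numComponents k s = numComponents k t := by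
        refine numComponents_congr k s t (fun q _ => ?_)
        by_cases hq : q = p
        · rw [hq]; exact hsp
        · exact hst q hq
      omega
    · rcases Bool.eq_false_or_eq_true (s p) with hs | hs
      · have ht : t p = false := by
          rcases Bool.eq_false_or_eq_true (t p) with h | h
          · exact absurd (hs.trans h.symm) hsp
          · exact h
        have := addition_card hst hp hs ht
        omega
      · have ht : t p = true := by
          rcases Bool.eq_false_or_eq_true (t p) with h | h
          · exact h
          · exact absurd (hs.trans h.symm) hsp
        exact removal_card hst hp hs ht
  · have : numComponents k s = numComponents k t := by
      refine numComponents_congr k s t (fun q hq => ?_)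
      refine hst q (fun h => hp (h ▸ hq))
    omega

lemma multi_card (k : ℕ) (t : ℕ × ℕ → Bool) :
    ∀ d (s : ℕ × ℕ → Bool), diffCount k s t = d →
      numComponents k s ≤ numComponents k t + 3 * d := by
  intro d
  induction d with
  | zero =>
    intro s h
    have hcong : numComponents k s = numComponents k t := by
      refine numComponents_congr k s t (fun q hq => ?_)
      by_contra hne
      have hmem : q ∈ (Finset.range k ×ˢ Finset.range k).filter (fun q => s q ≠ t q) := by
        rw [Finset.mem_filter, Finset.mem_product, Finset.mem_range, Finset.mem_range]
        exact ⟨⟨hq.1, hq.2⟩, hne⟩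
      rw [diffCount, Finset.card_eq_zero] at h
      rw [h] at hmem
      exact absurd hmem (Finset.notMem_empty q)
    omega
  | succ d ih =>
    intro s h
    classical
    have hpos : 0 < ((Finset.range k ×ˢ Finset.range k).filter (fun q => s q ≠ t q)).card := by
      rw [diffCount] at h; omega
    obtain ⟨p, hpmem⟩ := Finset.card_pos.mp hpos
    set s' := Function.update s p (t p) with hs'
    have hfilt : (Finset.range k ×ˢ Finset.range k).filter (fun q => s' q ≠ t q) =
        ((Finset.range k ×ˢ Finset.range k).filter (fun q => s q ≠ t q)).erase p := by
      ext q
      rw [Finset.mem_erase, Finset.mem_filter, Finset.mem_filter]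
      by_cases hq : q = p
      · subst hq; simp [hs', Function.update_self]
      · simp [hs', Function.update_of_ne hq, hq]
    have hd' : diffCount k s' t = d := by
      rw [diffCount, hfilt, Finset.card_erase_of_mem hpmem, ← diffCount, h]
      omega
    have hstep : numComponents k s ≤ numComponents k s' + 3 := by
      refine step_card k s s' p (fun q hq => ?_)
      rw [hs', Function.update_of_ne hq]
    have := ih s' hd'
    omega

lemma conn_card (n : ℕ) (M : ℕ × ℕ → Bool) (h : ImgConnected n M) :
    numComponents n M ≤ 1 := by
  have hlift : ∀ a b, Relation.ReflTransGen (BlackAdj n M) a b →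
      ∀ (ha : InSquare n a ∧ M a = true) (hb : InSquare n b ∧ M b = true),
      Relation.ReflTransGen (imageGraph n M).Adj ⟨a, ha⟩ ⟨b, hb⟩ := by
    intro a b hab
    induction hab with
    | refl => intro ha hb; exact Relation.ReflTransGen.refl
    | tail hrest hlast ih =>
      intro ha hb
      exact Relation.ReflTransGen.tail (ih ha ⟨hlast.1, hlast.2.2.1⟩)
        (show Adj _ _ from hlast.2.2.2.2)
  haveI : Subsingleton (imageGraph n M).ConnectedComponent := by
    constructor
    refine SimpleGraph.ConnectedComponent.ind₂ (fun u v => ?_)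
    refine (SimpleGraph.ConnectedComponent.eq).mpr ?_
    rw [SimpleGraph.reachable_iff_reflTransGen]
    exact hlift u.1 v.1 (h u.1 v.1 u.2.1 v.2.1 u.2.2 v.2.2) u.2 v.2
  rw [numComponents]
  rcases isEmpty_or_nonempty (imageGraph n M).ConnectedComponent with he | hne
  · simp [Nat.card_of_isEmpty]
  · haveI := uniqueOfSubsingleton (Classical.arbitrary (imageGraph n M).ConnectedComponent)
    simp [Nat.card_unique]

theorem dist_to_connectedness_ge_components' (n : ℕ) (M : ℕ × ℕ → Bool)
    (h : 1 ≤ numComponents n M) :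
    ((distConn n M : ℝ)) ≥ ((numComponents n M : ℝ) - 1) / 3 := by
  have hne : {d | ∃ t, ImgConnected n t ∧ diffCount n M t = d}.Nonempty := by
    refine ⟨diffCount n M (fun _ => false), ⟨fun _ => false, ?_, rfl⟩⟩
    intro p q _ _ hp _
    exact absurd hp (by simp)
  have hmem : ∃ t, ImgConnected n t ∧ diffCount n M t = distConn n M := Nat.sInf_mem hne
  obtain ⟨t, hconn, hd⟩ := hmem
  have h1 := multi_card n t (distConn n M) M hd
  have h2 := conn_card n t hconn
  rw [ge_iff_le, div_le_iff₀ (by norm_num : (0:ℝ) < 3)]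
  have h1' : (numComponents n M : ℝ) ≤ numComponents n t + 3 * distConn n M := by
    exact_mod_cast h1
  have h2' : (numComponents n t : ℝ) ≤ 1 := by exact_mod_cast h2
  linarith

/-- If the image graph of an `n × n` image `M` has `C ≥ 1` connected components,
then the distance from `M` to connectedness is at least `(C - 1)/3`. -/
theorem dist_to_connectedness_ge_components (n : ℕ) (M : ℕ × ℕ → Bool)
    (h : 1 ≤ numComponents n M) :
    ((distConn n M : ℝ)) ≥ ((numComponents n M : ℝ) - 1) / 3 := dist_to_connectedness_ge_components' n M h
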